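/- Let E ⊆ ℝ^N be a bounded measurable set with |E| = 1, barycenter at the origin, and diameter at most D. Suppose B is a ball of volume 1 centered at a point whose distance from the hyperplane {x₁ = 0} equals d. Then (ω_N^{(N−1)/N}/ω_{N−1}) · ||B ∩ {x₁>0}| − 1/2| ≤ d ≤ D |E Δ B|. -/

import Mathlib

open MeasureTheory Metric Set ENNReal

noncomputable section

abbrev En (N : ℕ) := EuclideanSpace ℝ (Fin N)

/-- The volume of the unit ball in `ℝ^N`. -/
def omegaB (N : ℕ) : ℝ := (volume (Metric.ball (0 : En N) 1)).toReal

/-- The divergence of a vector field on `ℝ^N`. -/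
def divg {N : ℕ} (φ : En N → En N) (x : En N) : ℝ :=
  ∑ i, fderiv ℝ φ x (EuclideanSpace.single i (1 : ℝ)) i

/-- The set of candidate values in the sup defining the distributional perimeter of `E`. -/
def perSet {N : ℕ} (E : Set (En N)) : Set ℝ :=
  {p | ∃ φ : En N → En N, ContDiff ℝ 1 φ ∧ HasCompactSupport φ ∧
    (∀ x, ‖φ x‖ ≤ 1) ∧ p = ∫ x in E, divg φ x}

/-- The distributional (De Giorgi) perimeter of `E`. -/
def perimeter {N : ℕ} (E : Set (En N)) : ℝ := sSup (perSet E)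

/-- `E` has finite perimeter. -/
def HasFinitePerimeter {N : ℕ} (E : Set (En N)) : Prop := BddAbove (perSet E)

/-- The essential diameter of `E`. -/
def essDiam {N : ℕ} (E : Set (En N)) : ℝ≥0∞ :=
  sInf {d : ℝ≥0∞ |
    (volume.prod volume) {p : En N × En N | p.1 ∈ E ∧ p.2 ∈ E ∧ d < edist p.1 p.2} = 0}

/-- The barycenter of `E`. -/
def bary {N : ℕ} (E : Set (En N)) : En N := ((volume E).toReal)⁻¹ • ∫ x in E, x

/-- The radius of the ball having the same volume as `E`. -/
def ballRad {N : ℕ} (E : Set (En N)) : ℝ := ((volume E).toReal / omegaB N) ^ (1 / (N : ℝ))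

/-- The barycentric asymmetry `λ₀(E)`. -/
def lam0 {N : ℕ} (E : Set (En N)) : ℝ :=
  (volume (symmDiff E (Metric.ball (bary E) (ballRad E)))).toReal / (volume E).toReal

/-- The Fraenkel asymmetry `λ(E)`. -/
def fraenkel {N : ℕ} (E : Set (En N)) : ℝ :=
  ⨅ y : En N, (volume (symmDiff E (Metric.ball y (ballRad E)))).toReal / (volume E).toReal

/-- The isoperimetric deficit `δ(E)`. -/
def deficit {N : ℕ} (E : Set (En N)) : ℝ :=
  (perimeter E - perimeter (Metric.ball (0 : En N) (ballRad E))) /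
    perimeter (Metric.ball (0 : En N) (ballRad E))

/-- Measure-theoretic connectedness. -/
def MConnected {N : ℕ} (E : Set (En N)) : Prop :=
  ∀ F : Set (En N), MeasurableSet F → F ⊆ E → 0 < volume F → volume F < volume E →
    perimeter E < perimeter F + perimeter (E \ F)

lemma omegaB_pos (N : ℕ) : 0 < omegaB N :=
  ENNReal.toReal_pos (measure_ball_pos volume (0 : En N) one_pos).ne' measure_ball_lt_top.ne

lemma ball_mem_iff {M : ℕ} (b x : En M) (r : ℝ) (hr : 0 < r) :
    x ∈ Metric.ball b r ↔ ∑ j, (x j - b j)^2 < r^2 := by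
  rw [mem_ball, EuclideanSpace.dist_eq, Real.sqrt_lt' hr]
  simp [Real.dist_eq, sq_abs]

lemma pi_slice_vol {M : ℕ} (b : En M) (r : ℝ) (hr : 0 < r) :
    volume {y : Fin M → ℝ | ∑ j, (y j - b j)^2 < r^2}
      = ENNReal.ofReal (r ^ M) * ENNReal.ofReal (omegaB M) := by
  have hmp := EuclideanSpace.volume_preserving_symm_measurableEquiv_toLp (Fin M)
  have hTm : MeasurableSet {y : Fin M → ℝ | ∑ j, (y j - b j)^2 < r^2} := by
    apply measurableSet_lt _ measurable_const
    exact Finset.measurable_sum _ fun j _ => ((measurable_pi_apply j).sub measurable_const).pow_const 2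
  have h := hmp.measure_preimage hTm.nullMeasurableSet
  have hpre : (⇑(MeasurableEquiv.toLp 2 (Fin M → ℝ)).symm) ⁻¹'
      {y : Fin M → ℝ | ∑ j, (y j - b j)^2 < r^2} = Metric.ball b r := by
    ext x
    simp only [mem_preimage, mem_setOf_eq, ball_mem_iff b x r hr]
    rfl
  rw [hpre] at h
  rw [← h, Measure.addHaar_ball_of_pos volume b hr, finrank_euclideanSpace_fin,
    omegaB, ENNReal.ofReal_toReal measure_ball_lt_top.ne]

variable {M : ℕ} (a : ℝ) (b : Fin M → ℝ) (r : ℝ)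

def Sball (a : ℝ) (b : Fin M → ℝ) (r : ℝ) : Set (ℝ × (Fin M → ℝ)) :=
  {p | (p.1 - a)^2 + ∑ j, (p.2 j - b j)^2 < r^2}

lemma Sball_meas : MeasurableSet (Sball a b r) := by
  apply measurableSet_lt _ measurable_const
  exact (measurable_fst.sub measurable_const).pow_const 2 |>.add
    (Finset.measurable_sum _ fun j _ =>
      ((measurable_snd.eval.sub measurable_const)).pow_const 2)

lemma Sball_half :
    volume (Sball a b r ∩ {p | a < p.1}) + volume (Sball a b r ∩ {p | a < p.1})
      = volume (Sball a b r) := by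
  have hσ : MeasurePreserving (fun p : ℝ × (Fin M → ℝ) => (2*a - p.1, p.2)) volume volume := by
    rw [Measure.volume_eq_prod]
    exact (Measure.measurePreserving_sub_left volume (2*a)).prod (MeasurePreserving.id volume)
  have hmeasgt : MeasurableSet (Sball a b r ∩ {p : ℝ × (Fin M → ℝ) | a < p.1}) :=
    (Sball_meas a b r).inter (measurableSet_lt measurable_const measurable_fst)
  have hpre : (fun p : ℝ × (Fin M → ℝ) => (2*a - p.1, p.2)) ⁻¹'
      (Sball a b r ∩ {p | a < p.1}) = Sball a b r ∩ {p | p.1 < a} := by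
    ext p
    simp only [Sball, mem_preimage, mem_inter_iff, mem_setOf_eq]
    constructor
    · rintro ⟨h1, h2⟩; exact ⟨by nlinarith [h1], by linarith⟩
    · rintro ⟨h1, h2⟩; exact ⟨by nlinarith [h1], by linarith⟩
  have hrefl := hσ.measure_preimage hmeasgt.nullMeasurableSet
  rw [hpre] at hrefl
  have hnull : volume {p : ℝ × (Fin M → ℝ) | p.1 = a} = 0 := by
    have : {p : ℝ × (Fin M → ℝ) | p.1 = a} = {a} ×ˢ (univ : Set (Fin M → ℝ)) := by
      ext p
      constructor
      · intro h; exact ⟨h, Set.mem_univ _⟩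
      · rintro ⟨h, -⟩; exact h
    rw [this, Measure.volume_eq_prod, Measure.prod_prod]
    simp
  have hsplit : volume (Sball a b r) =
      volume (Sball a b r ∩ {p | p.1 < a}) + volume (Sball a b r ∩ {p | a < p.1}) := by
    have h1 : volume (Sball a b r ∩ {p | p.1 ≤ a}) = volume (Sball a b r ∩ {p | p.1 < a}) := by
      apply le_antisymm
      · have hu : Sball a b r ∩ {p | p.1 ≤ a} ⊆
            (Sball a b r ∩ {p | p.1 < a}) ∪ {p | p.1 = a} := by
          rintro p ⟨hp, (hle : p.1 ≤ a)⟩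
          rcases lt_or_eq_of_le hle with h | h
          · exact Or.inl ⟨hp, h⟩
          · exact Or.inr h
        calc volume (Sball a b r ∩ {p | p.1 ≤ a})
            ≤ volume ((Sball a b r ∩ {p | p.1 < a}) ∪ {p | p.1 = a}) := measure_mono hu
          _ ≤ volume (Sball a b r ∩ {p | p.1 < a}) + volume {p : ℝ × (Fin M → ℝ) | p.1 = a} :=
              measure_union_le _ _
          _ = volume (Sball a b r ∩ {p | p.1 < a}) := by rw [hnull, add_zero]
      · exact measure_mono (inter_subset_inter_right _ fun p (hp : p.1 < a) => (le_of_lt hp : p.1 ≤ a))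
    have h2 := measure_inter_add_diff (μ := volume) (t := {p : ℝ × (Fin M → ℝ) | p.1 ≤ a})
      (Sball a b r) (measurableSet_le measurable_fst (measurable_const (a := a)))
    have h3 : Sball a b r \ {p | p.1 ≤ a} = Sball a b r ∩ {p | a < p.1} := by
      ext p; simp [Sball, not_le, and_comm]
    rw [h3, h1] at h2
    exact h2.symm
  rw [hsplit, hrefl]

lemma Sball_slab (l u : ℝ) (hr : 0 < r) :
    volume (Sball a b r ∩ {p | p.1 ∈ Set.Ioc l u})
      ≤ ENNReal.ofReal (u - l) * (ENNReal.ofReal (r ^ M) * ENNReal.ofReal (omegaB M)) := by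
  have hsub : Sball a b r ∩ {p | p.1 ∈ Set.Ioc l u} ⊆
      (Set.Ioc l u) ×ˢ {y : Fin M → ℝ | ∑ j, (y j - b j)^2 < r^2} := by
    rintro p ⟨hp, hmem⟩
    refine ⟨hmem, ?_⟩
    simp only [Sball, mem_setOf_eq] at hp ⊢
    nlinarith [sq_nonneg (p.1 - a)]
  calc volume (Sball a b r ∩ {p | p.1 ∈ Set.Ioc l u})
      ≤ volume ((Set.Ioc l u) ×ˢ {y : Fin M → ℝ | ∑ j, (y j - b j)^2 < r^2}) := measure_mono hsub
    _ = ENNReal.ofReal (u - l) * (ENNReal.ofReal (r ^ M) * ENNReal.ofReal (omegaB M)) := by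
        rw [Measure.volume_eq_prod, Measure.prod_prod, Real.volume_Ioc]
        exact congrArg _ (pi_slice_vol (M := M) (WithLp.toLp 2 b) r hr)

lemma transfer {M : ℕ} (c : En (M+1)) (r : ℝ) (hr : 0 < r) (i₀ : Fin (M+1))
    (P : ℝ → Prop) (hP : MeasurableSet {t : ℝ | P t}) :
    volume (Metric.ball c r ∩ {x : En (M+1) | P (x i₀)}) =
      volume (Sball (c i₀) (fun j => c (i₀.succAbove j)) r ∩ {p | P p.1}) := by
  set G := (MeasurableEquiv.toLp 2 (Fin (M+1) → ℝ)).symm.trans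
      (MeasurableEquiv.piFinSuccAbove (fun _ => ℝ) i₀) with hG
  have hGapp : ∀ x : En (M+1), G x = (x i₀, fun j => x (i₀.succAbove j)) := by
    intro x
    simp [hG, MeasurableEquiv.piFinSuccAbove]
    rfl
  have hGmp : MeasurePreserving G volume volume :=
    (volume_preserving_piFinSuccAbove (fun _ => ℝ) i₀).comp
      (EuclideanSpace.volume_preserving_symm_measurableEquiv_toLp (Fin (M+1)))
  have hSm : MeasurableSet (Sball (c i₀) (fun j => c (i₀.succAbove j)) r ∩ {p | P p.1}) := by
    refine MeasurableSet.inter ?_ (measurable_fst hP)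
    apply measurableSet_lt _ measurable_const
    exact (measurable_fst.sub measurable_const).pow_const 2 |>.add
      (Finset.measurable_sum _ fun j _ =>
        ((measurable_snd.eval.sub measurable_const)).pow_const 2)
  have h := hGmp.measure_preimage hSm.nullMeasurableSet
  have hpre : ⇑G ⁻¹' (Sball (c i₀) (fun j => c (i₀.succAbove j)) r ∩ {p | P p.1})
      = Metric.ball c r ∩ {x : En (M+1) | P (x i₀)} := by
    ext x
    rw [mem_preimage, hGapp x]
    simp only [Sball, mem_inter_iff, mem_setOf_eq]
    rw [ball_mem_iff c x r hr, Fin.sum_univ_succAbove (fun i => (x i - c i)^2) i₀]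
  rw [hpre] at h
  exact h

lemma transfer_true {M : ℕ} (c : En (M+1)) (r : ℝ) (hr : 0 < r) (i₀ : Fin (M+1)) :
    volume (Metric.ball c r) =
      volume (Sball (c i₀) (fun j => c (i₀.succAbove j)) r) := by
  have h := transfer c r hr i₀ (fun _ => True) MeasurableSet.univ
  simpa using h

lemma ineq1 {M : ℕ} (c : En (M+1)) (r : ℝ) (i₀ : Fin (M+1))
    (hB : volume (Metric.ball c r) = 1) :
    omegaB (M+1) ^ ((M : ℝ) / (M+1)) / omegaB M *
      |(volume (Metric.ball c r ∩ {x : En (M+1) | 0 < x i₀})).toReal - 1/2| ≤ |c i₀| := by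
  have hr : 0 < r := by
    by_contra h
    rw [Metric.ball_eq_empty.2 (not_lt.1 h)] at hB
    simp at hB
  set a := c i₀ with ha
  set b := fun j => c (i₀.succAbove j) with hb
  have hωM := omegaB_pos M
  have hωN := omegaB_pos (M+1)
  -- Sball facts
  have hSvol : volume (Sball a b r) = 1 := by rw [← transfer_true c r hr i₀, hB]
  have hSfin : volume (Sball a b r) ≠ ⊤ := by rw [hSvol]; exact one_ne_top
  have hhalf : volume (Sball a b r ∩ {p | a < p.1}) = 1/2 := by
    have h2 := Sball_half a b r
    rw [hSvol, ← two_mul] at h2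
    exact (ENNReal.eq_div_iff two_ne_zero ofNat_ne_top).2 h2
  have hfin : ∀ s : Set (ℝ × (Fin M → ℝ)), volume (Sball a b r ∩ s) ≠ ⊤ := fun s =>
    (lt_of_le_of_lt (measure_mono inter_subset_left) (by rw [hSvol]; exact one_lt_top)).ne
  -- transfer statements
  have h0 : volume (Metric.ball c r ∩ {x : En (M+1) | 0 < x i₀})
      = volume (Sball a b r ∩ {p | 0 < p.1}) :=
    transfer c r hr i₀ (fun t => 0 < t) measurableSet_Ioi
  -- measurability helpers
  have hSm : MeasurableSet (Sball a b r) := by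
    apply measurableSet_lt _ measurable_const
    exact (measurable_fst.sub measurable_const).pow_const 2 |>.add
      (Finset.measurable_sum _ fun j _ =>
        ((measurable_snd.eval.sub measurable_const)).pow_const 2)
  -- main slab estimate
  have key : |(volume (Sball a b r ∩ {p | 0 < p.1})).toReal - 1/2|
      ≤ |a| * (r ^ M * omegaB M) := by
    rcases le_or_gt 0 a with hale | halt
    · have hdecomp : Sball a b r ∩ {p | 0 < p.1}
          = (Sball a b r ∩ {p | a < p.1}) ∪ (Sball a b r ∩ {p | p.1 ∈ Set.Ioc 0 a}) := by
        ext p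
        simp only [mem_inter_iff, mem_union, mem_setOf_eq, Set.mem_Ioc]
        constructor
        · rintro ⟨hS, h⟩
          rcases le_or_gt p.1 a with h' | h'
          · exact Or.inr ⟨hS, h, h'⟩
          · exact Or.inl ⟨hS, h'⟩
        · rintro (⟨hS, h⟩ | ⟨hS, h1, h2⟩)
          · exact ⟨hS, lt_of_le_of_lt hale h⟩
          · exact ⟨hS, h1⟩
      have hdisj : Disjoint (Sball a b r ∩ {p | a < p.1})
          (Sball a b r ∩ {p : ℝ × (Fin M → ℝ) | p.1 ∈ Set.Ioc 0 a}) := by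
        rw [Set.disjoint_left]
        rintro p ⟨-, h1⟩ ⟨-, h2⟩
        exact absurd h2.2 (not_le.2 h1)
      have hmeas2 : MeasurableSet (Sball a b r ∩ {p : ℝ × (Fin M → ℝ) | p.1 ∈ Set.Ioc 0 a}) :=
        hSm.inter (measurable_fst measurableSet_Ioc)
      have hvol : volume (Sball a b r ∩ {p | 0 < p.1})
          = 1/2 + volume (Sball a b r ∩ {p | p.1 ∈ Set.Ioc 0 a}) := by
        rw [hdecomp, measure_union hdisj hmeas2, hhalf]
      have hslab := Sball_slab a b r 0 a hr
      have htr : (volume (Sball a b r ∩ {p | p.1 ∈ Set.Ioc 0 a})).toReal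
          ≤ |a| * (r ^ M * omegaB M) := by
        have h' := ENNReal.toReal_mono (by
            exact ENNReal.mul_ne_top ofReal_ne_top
              (ENNReal.mul_ne_top ofReal_ne_top ofReal_ne_top)) hslab
        rw [ENNReal.toReal_mul, ENNReal.toReal_mul,
          ENNReal.toReal_ofReal (by linarith : (0:ℝ) ≤ a - 0),
          ENNReal.toReal_ofReal (pow_nonneg hr.le M),
          ENNReal.toReal_ofReal hωM.le] at h'
        rw [abs_of_nonneg hale]
        linarith [h']
      have h12 : (volume (Sball a b r ∩ {p | 0 < p.1})).toReal
          = 1/2 + (volume (Sball a b r ∩ {p | p.1 ∈ Set.Ioc 0 a})).toReal := by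
        have h' := congrArg ENNReal.toReal hvol
        rwa [ENNReal.toReal_add (by norm_num) (hfin _), ENNReal.toReal_div,
          ENNReal.toReal_one, ENNReal.toReal_ofNat] at h'
      rw [h12, add_comm, add_sub_cancel_right,
        abs_of_nonneg (ENNReal.toReal_nonneg :
          (0:ℝ) ≤ (volume (Sball a b r ∩ {p | p.1 ∈ Set.Ioc 0 a})).toReal)]
      exact htr
    · -- a < 0
      have hdecomp : Sball a b r ∩ {p | a < p.1}
          = (Sball a b r ∩ {p | 0 < p.1}) ∪ (Sball a b r ∩ {p | p.1 ∈ Set.Ioc a 0}) := by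
        ext p
        simp only [mem_inter_iff, mem_union, mem_setOf_eq, Set.mem_Ioc]
        constructor
        · rintro ⟨hS, h⟩
          rcases le_or_gt p.1 0 with h' | h'
          · exact Or.inr ⟨hS, h, h'⟩
          · exact Or.inl ⟨hS, h'⟩
        · rintro (⟨hS, h⟩ | ⟨hS, h1, h2⟩)
          · exact ⟨hS, lt_trans halt h⟩
          · exact ⟨hS, h1⟩
      have hdisj : Disjoint (Sball a b r ∩ {p | 0 < p.1})
          (Sball a b r ∩ {p : ℝ × (Fin M → ℝ) | p.1 ∈ Set.Ioc a 0}) := by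
        rw [Set.disjoint_left]
        rintro p ⟨-, h1⟩ ⟨-, h2⟩
        exact absurd h2.2 (not_le.2 h1)
      have hmeas2 : MeasurableSet (Sball a b r ∩ {p : ℝ × (Fin M → ℝ) | p.1 ∈ Set.Ioc a 0}) :=
        hSm.inter (measurable_fst measurableSet_Ioc)
      have hvol : (1/2 : ℝ≥0∞)
          = volume (Sball a b r ∩ {p | 0 < p.1})
            + volume (Sball a b r ∩ {p | p.1 ∈ Set.Ioc a 0}) := by
        rw [← hhalf, hdecomp, measure_union hdisj hmeas2]
      have hslab := Sball_slab a b r a 0 hr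
      have htr : (volume (Sball a b r ∩ {p | p.1 ∈ Set.Ioc a 0})).toReal
          ≤ |a| * (r ^ M * omegaB M) := by
        have h' := ENNReal.toReal_mono (by
            exact ENNReal.mul_ne_top ofReal_ne_top
              (ENNReal.mul_ne_top ofReal_ne_top ofReal_ne_top)) hslab
        rw [ENNReal.toReal_mul, ENNReal.toReal_mul,
          ENNReal.toReal_ofReal (by linarith : (0:ℝ) ≤ 0 - a),
          ENNReal.toReal_ofReal (pow_nonneg hr.le M),
          ENNReal.toReal_ofReal hωM.le] at h'
        rw [abs_of_neg halt]
        linarith [h']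
      have h12 : (1/2 : ℝ) = (volume (Sball a b r ∩ {p | 0 < p.1})).toReal
          + (volume (Sball a b r ∩ {p | p.1 ∈ Set.Ioc a 0})).toReal := by
        have h' := congrArg ENNReal.toReal hvol
        rwa [ENNReal.toReal_add (hfin _) (hfin _), ENNReal.toReal_div,
          ENNReal.toReal_one, ENNReal.toReal_ofNat] at h'
      have hs0 : (0:ℝ) ≤ (volume (Sball a b r ∩ {p | p.1 ∈ Set.Ioc a 0})).toReal :=
        ENNReal.toReal_nonneg
      rw [abs_of_nonpos (by linarith)]
      linarith
  -- final algebra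
  rw [h0]
  have hr1 : r ^ (M+1) * omegaB (M+1) = 1 := by
    have h := congrArg ENNReal.toReal
      (hB.symm.trans (Measure.addHaar_ball_of_pos volume c hr))
    rw [ENNReal.toReal_mul, ENNReal.toReal_ofReal (by positivity), ENNReal.toReal_one,
      finrank_euclideanSpace_fin] at h
    exact h.symm
  set e : ℝ := (M : ℝ) / (M+1) with he
  have hrM : (r ^ (M+1) : ℝ) ^ e = r ^ M := by
    rw [← Real.rpow_natCast r (M+1), ← Real.rpow_mul hr.le, ← Real.rpow_natCast r M]
    congr 1
    rw [he]
    have : ((M:ℝ)+1) ≠ 0 := by positivity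
    push_cast
    field_simp
  have hkey : omegaB (M+1) ^ e * r ^ M = 1 := by
    rw [← hrM, ← Real.mul_rpow hωN.le (by positivity), mul_comm (omegaB (M+1)), hr1,
      Real.one_rpow]
  calc omegaB (M+1) ^ e / omegaB M * |(volume (Sball a b r ∩ {p | 0 < p.1})).toReal - 1/2|
      ≤ omegaB (M+1) ^ e / omegaB M * (|a| * (r ^ M * omegaB M)) := by
        apply mul_le_mul_of_nonneg_left key (by positivity)
    _ = |a| * (omegaB (M+1) ^ e * r ^ M) := by field_simp
    _ = |a| := by rw [hkey, mul_one]

lemma abs_coord_le {N : ℕ} (x : En N) (i : Fin N) : |x i| ≤ ‖x‖ := by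
  have h := abs_real_inner_le_norm (EuclideanSpace.single i (1:ℝ)) x
  rw [EuclideanSpace.inner_single_left, EuclideanSpace.norm_single] at h
  simpa using h

lemma coord_int {N : ℕ} (s : Set (En N)) (hs : MeasurableSet s) (D : ℝ) (hsub : s ⊆ Metric.ball 0 D)
    (i : Fin N) : IntegrableOn (fun x : En N => x i) s := by
  have hvol : volume s < ⊤ := lt_of_le_of_lt (measure_mono hsub) measure_ball_lt_top
  refine Integrable.mono' (g := fun _ => D) (integrableOn_const hvol.ne) ?_ ?_
  · exact ((continuous_apply i).comp (PiLp.continuous_ofLp 2 _)).aestronglyMeasurable.restrict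
  · refine (ae_restrict_iff' hs).2 (Filter.Eventually.of_forall fun x hx => ?_)
    calc ‖x i‖ ≤ ‖x‖ := abs_coord_le x i
    _ ≤ D := le_of_lt (by simpa using hsub hx)

lemma vec_int {N : ℕ} (s : Set (En N)) (hs : MeasurableSet s) (D : ℝ) (hsub : s ⊆ Metric.ball 0 D) :
    IntegrableOn (fun x : En N => x) s := by
  have hvol : volume s < ⊤ := lt_of_le_of_lt (measure_mono hsub) measure_ball_lt_top
  refine Integrable.mono' (g := fun _ => D) (integrableOn_const hvol.ne) ?_ ?_
  · exact continuous_id.aestronglyMeasurable.restrict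
  · refine (ae_restrict_iff' hs).2 (Filter.Eventually.of_forall fun x hx => ?_)
    exact le_of_lt (by simpa using hsub hx)

lemma coord_of_vec {N : ℕ} (s : Set (En N)) (hint : IntegrableOn (fun x : En N => x) s)
    (i : Fin N) : (∫ x in s, x) i = ∫ x in s, x i := by
  have := (EuclideanSpace.proj i (𝕜 := ℝ) (ι := Fin N)).integral_comp_comm hint
  simpa [EuclideanSpace.proj, PiLp.proj, PiLp.projₗ] using this.symm

lemma ball_integral_zero {N : ℕ} (r : ℝ) : (∫ x in Metric.ball (0 : En N) r, x) = 0 := by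
  have hmp : MeasurePreserving (fun x : En N => -x) volume volume :=
    Measure.measurePreserving_neg volume
  have hemb : MeasurableEmbedding (fun x : En N => -x) :=
    (Homeomorph.neg (En N)).measurableEmbedding
  have hpre : (fun x : En N => -x) ⁻¹' Metric.ball 0 r = Metric.ball 0 r := by
    ext x; simp
  have h := hmp.setIntegral_preimage_emb hemb (fun x => x) (Metric.ball 0 r)
  rw [hpre] at h
  have h2 : (∫ x in Metric.ball (0 : En N) r, -x) = ∫ x in Metric.ball (0 : En N) r, x := h
  rw [integral_neg] at h2
  have h3 : (2 : ℝ) • (∫ x in Metric.ball (0 : En N) r, x) = 0 := by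
    rw [two_smul]; nth_rewrite 1 [← h2]; exact neg_add_cancel _
  simpa using (smul_eq_zero.1 h3).resolve_left (by norm_num)

lemma ball_integral {N : ℕ} (c : En N) (r : ℝ) :
    (∫ x in Metric.ball c r, x) = (volume (Metric.ball c r)).toReal • c := by
  have hmp : MeasurePreserving (fun x : En N => x + c) volume volume :=
    measurePreserving_add_right volume c
  have hemb : MeasurableEmbedding (fun x : En N => x + c) :=
    (Homeomorph.addRight c).measurableEmbedding
  have hpre : (fun x : En N => x + c) ⁻¹' Metric.ball c r = Metric.ball 0 r := by
    ext x; simp [dist_eq_norm]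
  have h := hmp.setIntegral_preimage_emb hemb (fun x => x) (Metric.ball c r)
  rw [hpre] at h
  have hint : IntegrableOn (fun x : En N => x) (Metric.ball (0:En N) r) := by
    rcases le_or_gt r 0 with hr | hr
    · simp [Metric.ball_eq_empty.2 hr]
    · exact vec_int _ measurableSet_ball r (by simp)
  rw [← h, integral_add hint (integrableOn_const measure_ball_lt_top.ne),
    ball_integral_zero, setIntegral_const, zero_add]
  simp [Measure.addHaar_ball_center, measureReal_def]

lemma ineq2 {N : ℕ} (hN : 0 < N) (E : Set (En N))
    (hmeas : MeasurableSet E)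
    (hvol : volume E = 1) (hbar : (∫ x in E, x) = (0 : En N))
    (D : ℝ)
    (c : En N) (r : ℝ) (hB : volume (Metric.ball c r) = 1)
    (hsub : E ∪ Metric.ball c r ⊆ Metric.ball (0 : En N) D) :
    |c ⟨0, hN⟩| ≤ D * (volume (symmDiff E (Metric.ball c r))).toReal := by
  set i₀ : Fin N := ⟨0, hN⟩
  set B := Metric.ball c r with hBdef
  have hBm : MeasurableSet B := measurableSet_ball
  have hEsub : E ⊆ Metric.ball (0 : En N) D := (subset_union_left).trans hsub
  have hBsub : B ⊆ Metric.ball (0 : En N) D := (subset_union_right).trans hsub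
  have hD : 0 ≤ D := by
    have hEne : E.Nonempty := by
      by_contra h
      rw [not_nonempty_iff_eq_empty.1 h] at hvol; simp at hvol
    obtain ⟨x, hx⟩ := hEne
    have := hEsub hx
    simp only [mem_ball, dist_zero_right] at this
    exact le_trans (norm_nonneg x) this.le
  -- integral over B of coordinate
  have hIB : IntegrableOn (fun x : En N => x) B := vec_int B hBm D hBsub
  have hIE : IntegrableOn (fun x : En N => x) E := vec_int E hmeas D hEsub
  have intB : (∫ x in B, x i₀) = c i₀ := by
    rw [← coord_of_vec B hIB, ball_integral, hB]
    simp
  have intE : (∫ x in E, x i₀) = 0 := by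
    rw [← coord_of_vec E hIE, hbar]; rfl
  have hIBc : IntegrableOn (fun x : En N => x i₀) B := coord_int B hBm D hBsub i₀
  have hIEc : IntegrableOn (fun x : En N => x i₀) E := coord_int E hmeas D hEsub i₀
  have splitB : (∫ x in B ∩ E, x i₀) + (∫ x in B \ E, x i₀) = c i₀ := by
    rw [← intB]; exact integral_inter_add_diff hmeas hIBc
  have splitE : (∫ x in E ∩ B, x i₀) + (∫ x in E \ B, x i₀) = 0 := by
    rw [← intE]; exact integral_inter_add_diff hBm hIEc
  have key : c i₀ = (∫ x in B \ E, x i₀) - (∫ x in E \ B, x i₀) := by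
    rw [inter_comm] at splitB
    linarith [splitB, splitE]
  have bound : ∀ (s : Set (En N)), s ⊆ Metric.ball (0:En N) D →
      |∫ x in s, x i₀| ≤ D * (volume s).toReal := by
    intro s hssub
    have hvols : volume s < ⊤ := lt_of_le_of_lt (measure_mono hssub) measure_ball_lt_top
    have := norm_setIntegral_le_of_norm_le_const (C := D) (f := fun x : En N => x i₀) hvols
      (fun x hx => by
        calc ‖x i₀‖ ≤ ‖x‖ := abs_coord_le x i₀
        _ ≤ D := le_of_lt (by simpa using hssub hx))
    simpa [mul_comm, measureReal_def] using this
  have hfin1 : volume (E \ B) < ⊤ :=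
    lt_of_le_of_lt (measure_mono (diff_subset.trans hEsub)) measure_ball_lt_top
  have hfin2 : volume (B \ E) < ⊤ :=
    lt_of_le_of_lt (measure_mono (diff_subset.trans hBsub)) measure_ball_lt_top
  have hsd : (volume (symmDiff E B)).toReal
      = (volume (E \ B)).toReal + (volume (B \ E)).toReal := by
    rw [Set.symmDiff_def, measure_union (disjoint_sdiff_sdiff) (hBm.diff hmeas),
      ENNReal.toReal_add hfin1.ne hfin2.ne]
  rw [key]
  calc |(∫ x in B \ E, x i₀) - (∫ x in E \ B, x i₀)|
      ≤ |∫ x in B \ E, x i₀| + |∫ x in E \ B, x i₀| := abs_sub _ _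
    _ ≤ D * (volume (B \ E)).toReal + D * (volume (E \ B)).toReal := by
        have b1 := bound (B \ E) ((diff_subset (s := B) (t := E)).trans hBsub)
        have b2 := bound (E \ B) ((diff_subset (s := E) (t := B)).trans hEsub)
        exact add_le_add b1 b2
    _ = D * (volume (symmDiff E B)).toReal := by rw [hsd]; ring


/-- If `E` has unit volume, barycenter at the origin and diameter at most `D`,
and `B` is a unit-volume ball centered at distance `d` from `{x₁ = 0}` (with `E ∪ B` inside
the ball of radius `D` about the origin), then
`(ω_N^{(N-1)/N}/ω_{N-1}) ||B ∩ {x₁>0}| - 1/2| ≤ d ≤ D |E Δ B|`. -/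
theorem dist_center_le_symmDiff {N : ℕ} (hN : 0 < N) (E : Set (En N))
    (hmeas : MeasurableSet E) (hEb : Bornology.IsBounded E)
    (hvol : volume E = 1) (hbar : (∫ x in E, x) = (0 : En N))
    (D : ℝ) (hdiam : Metric.diam E ≤ D)
    (c : En N) (r d : ℝ) (hB : volume (Metric.ball c r) = 1) (hd : d = |c ⟨0, hN⟩|)
    (hsub : E ∪ Metric.ball c r ⊆ Metric.ball (0 : En N) D) :
    (omegaB N) ^ (((N : ℝ) - 1) / N) / omegaB (N - 1) *
        |(volume (Metric.ball c r ∩ {x : En N | 0 < x ⟨0, hN⟩})).toReal - 1/2| ≤ d ∧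
      d ≤ D * (volume (symmDiff E (Metric.ball c r))).toReal := by
  obtain ⟨M, rfl⟩ : ∃ M, N = M + 1 := ⟨N - 1, (Nat.succ_pred_eq_of_pos hN).symm⟩
  constructor
  · have h1 := ineq1 c r ⟨0, hN⟩ hB
    rw [hd]
    have hexp : ((((M+1 : ℕ)) : ℝ) - 1) / (((M+1 : ℕ)) : ℝ) = (M : ℝ) / (M + 1) := by
      push_cast; ring
    rw [hexp]
    exact h1
  · rw [hd]
    exact ineq2 hN E hmeas hvol hbar D c r hB hsub
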